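/- In the 3-agent, 3-good instance with valuations v_1 = (9, 6, 6), v_2 = (1, 10, 10), v_3 = (7, 7, 7), every EQ1 allocation assigns exactly one good to each agent. -/
import Mathlib


open Finset

/-- An allocation is a partition of the goods among the agents. -/
def isPartition {ι γ : Type*} [Fintype ι] [Fintype γ] [DecidableEq γ]
    (A : ι → Finset γ) : Prop :=
  (∀ i j, i ≠ j → Disjoint (A i) (A j)) ∧ Finset.univ.biUnion A = Finset.univ

/-- Additive value of a bundle. -/
def bundleVal {γ : Type*} (v : γ → ℚ) (S : Finset γ) : ℚ := ∑ g ∈ S, v g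

/-- EQ1: for every pair of agents `i, j` with `A i` nonempty, some good can be
removed from `A i` so that `i`'s value drops to at most `j`'s value. -/
def EQ1 {ι γ : Type*} [DecidableEq γ] (v : ι → γ → ℚ) (A : ι → Finset γ) : Prop :=
  ∀ i j, A i ≠ ∅ → ∃ g ∈ A i, bundleVal (v i) ((A i).erase g) ≤ bundleVal (v j) (A j)

/-- The instance of Fig. 5. -/
def vFig5 : Fin 3 → Fin 3 → ℚ := ![![9, 6, 6], ![1, 10, 10], ![7, 7, 7]]

def vInt : Fin 3 → Fin 3 → ℤ := ![![9, 6, 6], ![1, 10, 10], ![7, 7, 7]]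

lemma vFig5_cast (i g : Fin 3) : vFig5 i g = (vInt i g : ℚ) := by
  fin_cases i <;> fin_cases g <;> norm_num [vFig5, vInt]

lemma bundleVal_cast (i : Fin 3) (S : Finset (Fin 3)) :
    bundleVal (vFig5 i) S = ((∑ g ∈ S, vInt i g : ℤ) : ℚ) := by
  unfold bundleVal
  push_cast
  exact Finset.sum_congr rfl fun g _ => vFig5_cast i g

def EQ1Int (A : Fin 3 → Finset (Fin 3)) : Prop :=
  ∀ i j : Fin 3, A i ≠ ∅ →
    ∃ g ∈ A i, (∑ h ∈ (A i).erase g, vInt i h) ≤ ∑ h ∈ A j, vInt j h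

set_option maxRecDepth 20000 in
lemma key : ∀ A : Fin 3 → Finset (Fin 3), isPartition A → EQ1Int A →
    ∀ i, (A i).card = 1 := by
  unfold isPartition EQ1Int vInt
  decide

/-- in the instance of Fig. 5, every EQ1 allocation assigns
exactly one good to each agent. -/
theorem stmt10 (A : Fin 3 → Finset (Fin 3)) (hpart : isPartition A)
    (heq1 : EQ1 vFig5 A) : ∀ i, (A i).card = 1 := by
  refine key A hpart fun i j hne => ?_
  obtain ⟨g, hg, hle⟩ := heq1 i j hne
  refine ⟨g, hg, ?_⟩
  rw [bundleVal_cast, bundleVal_cast, Int.cast_le] at hle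
  exact hle
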